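/- Let 1 ≤ r ≤ k, let X ∈ ℝ^{m×d} with m ≥ d have rank d, with singular value decomposition X = U D Vᵀ where U ∈ ℝ^{m×d} has orthonormal columns, D ∈ ℝ^{d×d} is diagonal with positive entries, and V ∈ ℝ^{d×d} is orthogonal. Let y_1,…,y_k ∈ ℝ^m, let α_1,…,α_k > 0, and set M = Σ_{i=1}^k α_i Uᵀ y_i y_iᵀ U ∈ ℝ^{d×d}. Assume the r-th largest eigenvalue of M is strictly greater than its (r+1)-th largest eigenvalue, and let Q_r ∈ ℝ^{d×r} be a matrix with orthonormal columns maximizing tr(QᵀMQ) over all Q ∈ ℝ^{d×r} with orthonormal columns. Then for every global minimizer (B*, A_1*, …, A_k*), over B ∈ ℝ^{d×r} and A_i ∈ ℝ^r, of the reweighted MTL objective Σ_{i=1}^k α_i ‖X B A_i − y_i‖², the column span of B* equals the column span of (XᵀX)^{-1} V D Q_r. -/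

import Mathlib

open Matrix BigOperators

/-- Euclidean norm of a vector in `ℝ^n`. -/
noncomputable def vnorm {n : ℕ} (v : Fin n → ℝ) : ℝ := Real.sqrt (∑ i, v i ^ 2)

namespace MTL
lemma dot_self_nonneg {n : ℕ} (v : Fin n → ℝ) : 0 ≤ v ⬝ᵥ v :=
  Finset.sum_nonneg fun i _ => mul_self_nonneg (v i)

lemma vnorm_sq {n : ℕ} (v : Fin n → ℝ) : vnorm v ^ 2 = v ⬝ᵥ v := by
  rw [vnorm, Real.sq_sqrt (Finset.sum_nonneg fun i _ => sq_nonneg (v i))]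
  simp [dotProduct, sq]

lemma dot_sum_left {d s : ℕ} (f : Fin s → Fin d → ℝ) (z : Fin d → ℝ) :
    (∑ t, f t) ⬝ᵥ z = ∑ t, f t ⬝ᵥ z := by
  simp [dotProduct, Finset.sum_mul, Finset.sum_comm (γ := Fin d)]

lemma dot_sum_right {d s : ℕ} (f : Fin s → Fin d → ℝ) (z : Fin d → ℝ) :
    z ⬝ᵥ (∑ t, f t) = ∑ t, z ⬝ᵥ f t := by
  simp [dotProduct, Finset.mul_sum, Finset.sum_comm (γ := Fin d)]

lemma expand_onb {d s : ℕ} (q : Fin s → Fin d → ℝ)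
    (hq : ∀ t u, q t ⬝ᵥ q u = if t = u then 1 else 0)
    (z : Fin d → ℝ) (β : Fin s → ℝ) :
    ((∑ t, β t • q t) - z) ⬝ᵥ ((∑ t, β t • q t) - z)
      = z ⬝ᵥ z - (∑ t, (q t ⬝ᵥ z) ^ 2) + ∑ t, (β t - q t ⬝ᵥ z) ^ 2 := by
  have h1 : (∑ t, β t • q t) ⬝ᵥ (∑ t, β t • q t) = ∑ t, (β t)^2 := by
    rw [dot_sum_left]
    refine Finset.sum_congr rfl fun t _ => ?_
    rw [smul_dotProduct, dot_sum_right]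
    simp [dotProduct_smul, hq, sq]
  have h2 : (∑ t, β t • q t) ⬝ᵥ z = ∑ t, β t * (q t ⬝ᵥ z) := by
    rw [dot_sum_left]; simp [smul_dotProduct]
  have h3 : z ⬝ᵥ (∑ t, β t • q t) = ∑ t, β t * (q t ⬝ᵥ z) := by
    rw [dot_sum_right]; simp [dotProduct_smul, dotProduct_comm z]
  rw [sub_dotProduct, dotProduct_sub, dotProduct_sub, h1, h2, h3]
  have h4 : ∑ t, (β t - q t ⬝ᵥ z) ^ 2
      = (∑ t, (β t)^2) - 2 * (∑ t, β t * (q t ⬝ᵥ z)) + ∑ t, (q t ⬝ᵥ z)^2 := by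
    rw [Finset.mul_sum, ← Finset.sum_sub_distrib, ← Finset.sum_add_distrib]
    exact Finset.sum_congr rfl fun t _ => by ring
  rw [h4]; ring

lemma bessel_le {d s : ℕ} (q : Fin s → Fin d → ℝ)
    (hq : ∀ t u, q t ⬝ᵥ q u = if t = u then 1 else 0) (z : Fin d → ℝ) :
    ∑ t, (q t ⬝ᵥ z) ^ 2 ≤ z ⬝ᵥ z := by
  have h := expand_onb q hq z (fun t => q t ⬝ᵥ z)
  simp only [sub_self] at h
  have h0 := dot_self_nonneg ((∑ t, (q t ⬝ᵥ z) • q t) - z)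
  rw [h] at h0
  simp only [ne_eq, OfNat.ofNat_ne_zero, not_false_eq_true, zero_pow, Finset.sum_const_zero] at h0
  linarith

lemma bessel_eq {d s : ℕ} (q : Fin s → Fin d → ℝ)
    (hq : ∀ t u, q t ⬝ᵥ q u = if t = u then 1 else 0) (z : Fin d → ℝ)
    (h : ∑ t, (q t ⬝ᵥ z) ^ 2 = z ⬝ᵥ z) :
    z = ∑ t, (q t ⬝ᵥ z) • q t := by
  have he := expand_onb q hq z (fun t => q t ⬝ᵥ z)
  simp only [sub_self] at he
  rw [h] at he
  simp only [ne_eq, OfNat.ofNat_ne_zero, not_false_eq_true, zero_pow, Finset.sum_const_zero,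
    sub_self, zero_add] at he
  have := dotProduct_self_eq_zero.mp he
  have := sub_eq_zero.mp this
  exact this.symm






variable {d r : ℕ}

def F (d r : ℕ) : Finset (Fin d) := Finset.univ.filter (fun j => (j : ℕ) < r)

lemma mem_F (j : Fin d) : j ∈ F d r ↔ (j : ℕ) < r := by simp [F]

lemma F_eq_map (hrd : r ≤ d) :
    F d r = Finset.map (Fin.castLEEmb hrd) Finset.univ := by
  ext j
  simp only [mem_F, Finset.mem_map, Finset.mem_univ, true_and]
  constructor
  · intro hj; exact ⟨⟨(j : ℕ), hj⟩, by simp [Fin.castLEEmb, Fin.ext_iff]⟩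
  · rintro ⟨t, rfl⟩; simpa [Fin.castLEEmb] using t.2

lemma card_F (hrd : r ≤ d) : (F d r).card = r := by
  rw [F_eq_map hrd, Finset.card_map, Finset.card_univ, Fintype.card_fin]

lemma sum_F {f : Fin d → ℝ} (hrd : r ≤ d) :
    ∑ j ∈ F d r, f j = ∑ t : Fin r, f (Fin.castLE hrd t) := by
  rw [F_eq_map hrd, Finset.sum_map]
  rfl

lemma t0_le (hrd : r < d) (hr1 : 1 ≤ r) (lam : Fin d → ℝ) (hanti : Antitone lam)
    {j : Fin d} (hj : (j : ℕ) < r) :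
    lam ⟨r - 1, lt_of_le_of_lt (Nat.sub_le r 1) hrd⟩ ≤ lam j :=
  hanti (by rw [Fin.le_def]; simp; omega)

lemma le_t0 (hrd : r < d) (lam : Fin d → ℝ) (hanti : Antitone lam)
    {j : Fin d} (hj : r ≤ (j : ℕ)) :
    lam j ≤ lam ⟨r - 1, lt_of_le_of_lt (Nat.sub_le r 1) hrd⟩ :=
  hanti (by rw [Fin.le_def]; simp; omega)

lemma key_facts (hrd : r < d) (hr1 : 1 ≤ r) (s : ℕ) (lam c : Fin d → ℝ)
    (hanti : Antitone lam)
    (hc0 : ∀ j, 0 ≤ c j) (hc1 : ∀ j, c j ≤ 1) (hcs : ∑ j, c j = (s : ℝ)) :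
    ∑ j, lam j * c j
      = ∑ j ∈ F d r, lam j
        - ((∑ j ∈ F d r, (lam j - lam ⟨r - 1, lt_of_le_of_lt (Nat.sub_le r 1) hrd⟩) * (1 - c j))
          + (∑ j ∈ (F d r)ᶜ, (lam ⟨r - 1, lt_of_le_of_lt (Nat.sub_le r 1) hrd⟩ - lam j) * c j)
          + lam ⟨r - 1, lt_of_le_of_lt (Nat.sub_le r 1) hrd⟩ * ((r : ℝ) - (s : ℝ))) := by
  set t0 : ℝ := lam ⟨r - 1, lt_of_le_of_lt (Nat.sub_le r 1) hrd⟩ with ht0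
  have hsplit : ∀ g : Fin d → ℝ, (∑ j, g j) = ∑ j ∈ F d r, g j + ∑ j ∈ (F d r)ᶜ, g j := by
    intro g; rw [Finset.sum_add_sum_compl]
  have e1 : ∑ j ∈ F d r, (lam j - t0) * (1 - c j)
      = ∑ j ∈ F d r, lam j - (r : ℝ) * t0 - ∑ j ∈ F d r, lam j * c j + t0 * ∑ j ∈ F d r, c j := by
    have : ∀ j ∈ F d r, (lam j - t0) * (1 - c j) = lam j - t0 - lam j * c j + t0 * c j := by
      intro j _; ring
    rw [Finset.sum_congr rfl this, Finset.sum_add_distrib, Finset.sum_sub_distrib,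
      Finset.sum_sub_distrib, Finset.sum_const, card_F hrd.le, ← Finset.mul_sum]
    push_cast; ring
  have e2 : ∑ j ∈ (F d r)ᶜ, (t0 - lam j) * c j
      = t0 * ∑ j ∈ (F d r)ᶜ, c j - ∑ j ∈ (F d r)ᶜ, lam j * c j := by
    have : ∀ j ∈ (F d r)ᶜ, (t0 - lam j) * c j = t0 * c j - lam j * c j := by
      intro j _; ring
    rw [Finset.sum_congr rfl this, Finset.sum_sub_distrib, ← Finset.mul_sum]
  have e3 : ∑ j ∈ F d r, c j + ∑ j ∈ (F d r)ᶜ, c j = (s : ℝ) := by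
    rw [← hsplit, hcs]
  have e4 : ∑ j, lam j * c j = ∑ j ∈ F d r, lam j * c j + ∑ j ∈ (F d r)ᶜ, lam j * c j :=
    hsplit _
  have e5 : t0 * (∑ j ∈ F d r, c j) + t0 * (∑ j ∈ (F d r)ᶜ, c j) = t0 * (s:ℝ) := by
    rw [← mul_add, e3]
  rw [e4, e1, e2]
  ring_nf
  ring_nf at e5
  linarith [e5]






lemma slack1_nonneg {d r : ℕ} (hrd : r < d) (hr1 : 1 ≤ r) (lam c : Fin d → ℝ)
    (hanti : Antitone lam) (hc1 : ∀ j, c j ≤ 1) :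
    0 ≤ ∑ j ∈ F d r, (lam j - lam ⟨r - 1, lt_of_le_of_lt (Nat.sub_le r 1) hrd⟩) * (1 - c j) :=
  Finset.sum_nonneg fun j hj =>
    mul_nonneg (by linarith [t0_le hrd hr1 lam hanti ((mem_F j).mp hj)]) (by linarith [hc1 j])

lemma slack2_nonneg {d r : ℕ} (hrd : r < d) (lam c : Fin d → ℝ)
    (hanti : Antitone lam) (hc0 : ∀ j, 0 ≤ c j) :
    0 ≤ ∑ j ∈ (F d r)ᶜ, (lam ⟨r - 1, lt_of_le_of_lt (Nat.sub_le r 1) hrd⟩ - lam j) * c j :=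
  Finset.sum_nonneg fun j hj => by
    have hjr : r ≤ (j : ℕ) := by
      have := Finset.mem_compl.mp hj; rw [mem_F] at this; omega
    exact mul_nonneg (by linarith [le_t0 hrd lam hanti hjr]) (hc0 j)

lemma kyfan_c {d r : ℕ} (hrd : r < d) (hr1 : 1 ≤ r) (s : ℕ) (hsr : s ≤ r)
    (lam c : Fin d → ℝ)
    (hanti : Antitone lam) (hlam0 : ∀ j, 0 ≤ lam j)
    (hc0 : ∀ j, 0 ≤ c j) (hc1 : ∀ j, c j ≤ 1) (hcs : ∑ j, c j = (s : ℝ)) :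
    ∑ j, lam j * c j ≤ ∑ j ∈ F d r, lam j := by
  rw [key_facts hrd hr1 s lam c hanti hc0 hc1 hcs]
  have h1 := slack1_nonneg hrd hr1 lam c hanti hc1
  have h2 := slack2_nonneg hrd lam c hanti hc0
  have h3 : 0 ≤ lam ⟨r - 1, lt_of_le_of_lt (Nat.sub_le r 1) hrd⟩ * ((r : ℝ) - (s : ℝ)) := by
    have : (s : ℝ) ≤ (r : ℝ) := by exact_mod_cast hsr
    exact mul_nonneg (hlam0 _) (by linarith)
  linarith

lemma kyfan_c_eq {d r : ℕ} (hrd : r < d) (hr1 : 1 ≤ r) (s : ℕ) (hsr : s ≤ r)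
    (lam c : Fin d → ℝ)
    (hanti : Antitone lam) (hlam0 : ∀ j, 0 ≤ lam j)
    (hgap : lam ⟨r, hrd⟩ < lam ⟨r - 1, lt_of_le_of_lt (Nat.sub_le r 1) hrd⟩)
    (hc0 : ∀ j, 0 ≤ c j) (hc1 : ∀ j, c j ≤ 1) (hcs : ∑ j, c j = (s : ℝ))
    (heq : ∑ j, lam j * c j = ∑ j ∈ F d r, lam j) :
    (∀ j : Fin d, (j : ℕ) < r → c j = 1) ∧ (∀ j : Fin d, r ≤ (j : ℕ) → c j = 0) := by
  set t0 : ℝ := lam ⟨r - 1, lt_of_le_of_lt (Nat.sub_le r 1) hrd⟩ with ht0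
  have hkey := key_facts hrd hr1 s lam c hanti hc0 hc1 hcs
  rw [heq] at hkey
  have h1 := slack1_nonneg hrd hr1 lam c hanti hc1
  have h2 := slack2_nonneg hrd lam c hanti hc0
  have ht0pos : 0 < t0 := lt_of_le_of_lt (hlam0 ⟨r, hrd⟩) hgap
  have h3 : 0 ≤ t0 * ((r : ℝ) - (s : ℝ)) := by
    have : (s : ℝ) ≤ (r : ℝ) := by exact_mod_cast hsr
    exact mul_nonneg ht0pos.le (by linarith)
  -- all three slack terms vanish
  have hz1 : ∑ j ∈ F d r, (lam j - t0) * (1 - c j) = 0 := by linarith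
  have hz2 : ∑ j ∈ (F d r)ᶜ, (t0 - lam j) * c j = 0 := by linarith
  have hz3 : t0 * ((r : ℝ) - (s : ℝ)) = 0 := by linarith
  -- conclusion for j ≥ r
  have hcz : ∀ j : Fin d, r ≤ (j : ℕ) → c j = 0 := by
    intro j hjr
    have hterm := (Finset.sum_eq_zero_iff_of_nonneg (fun j hj => by
      have hjr' : r ≤ (j : ℕ) := by
        have := Finset.mem_compl.mp hj; rw [mem_F] at this; omega
      exact mul_nonneg (by linarith [le_t0 hrd lam hanti hjr']) (hc0 j))).mp hz2
    have hjmem : j ∈ (F d r)ᶜ := Finset.mem_compl.mpr (by rw [mem_F]; omega)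
    have := hterm j hjmem
    have hlt : lam j < t0 := lt_of_le_of_lt (hanti (by rw [Fin.le_def]; simp; omega)) hgap
    rcases mul_eq_zero.mp this with h | h
    · exfalso; linarith
    · exact h
  refine ⟨?_, hcz⟩
  -- sum over F equals r
  have hs_eq : (s : ℝ) = (r : ℝ) := by
    rcases mul_eq_zero.mp hz3 with h | h
    · exfalso; linarith
    · linarith
  have hsumc_compl : ∑ j ∈ (F d r)ᶜ, c j = 0 :=
    Finset.sum_eq_zero fun j hj => hcz j (by
      have := Finset.mem_compl.mp hj; rw [mem_F] at this; omega)
  have hsumF : ∑ j ∈ F d r, c j = (r : ℝ) := by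
    have := Finset.sum_add_sum_compl (F d r) c
    rw [hsumc_compl, add_zero, hcs] at this
    rw [this, hs_eq]
  have hone : ∑ j ∈ F d r, (1 - c j) = 0 := by
    rw [Finset.sum_sub_distrib, Finset.sum_const, card_F hrd.le, hsumF]
    simp
  intro j hjr
  have hterm := (Finset.sum_eq_zero_iff_of_nonneg (fun j hj => by linarith [hc1 j])).mp hone
  have := hterm j ((mem_F j).mpr hjr)
  linarith






lemma parseval {d : ℕ} (p : Fin d → Fin d → ℝ)
    (hexp : ∀ v : Fin d → ℝ, ∑ j, (p j ⬝ᵥ v) • p j = v) (v : Fin d → ℝ) :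
    ∑ j, (p j ⬝ᵥ v) ^ 2 = v ⬝ᵥ v := by
  calc ∑ j, (p j ⬝ᵥ v) ^ 2 = ∑ j, ((p j ⬝ᵥ v) • p j) ⬝ᵥ v := by
        refine Finset.sum_congr rfl fun j _ => ?_
        rw [smul_dotProduct, smul_eq_mul, sq]
    _ = (∑ j, (p j ⬝ᵥ v) • p j) ⬝ᵥ v := (dot_sum_left _ _).symm
    _ = v ⬝ᵥ v := by rw [hexp]

lemma span_eq_span {d r s : ℕ} (hrd : r < d)
    (p : Fin d → Fin d → ℝ) (q : Fin s → Fin d → ℝ)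
    (hexp : ∀ v : Fin d → ℝ, ∑ j, (p j ⬝ᵥ v) • p j = v)
    (hpo : ∀ j j', p j ⬝ᵥ p j' = if j = j' then 1 else 0)
    (hqo : ∀ t u, q t ⬝ᵥ q u = if t = u then 1 else 0)
    (hc1 : ∀ j : Fin d, (j : ℕ) < r → ∑ t, (p j ⬝ᵥ q t) ^ 2 = 1)
    (hc0 : ∀ j : Fin d, r ≤ (j : ℕ) → ∑ t, (p j ⬝ᵥ q t) ^ 2 = 0) :
    Submodule.span ℝ (Set.range q)
      = Submodule.span ℝ (Set.range (fun t : Fin r => p (Fin.castLE hrd.le t))) := by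
  apply le_antisymm
  · rw [Submodule.span_le]
    rintro _ ⟨t, rfl⟩
    have hq : q t = ∑ j, (p j ⬝ᵥ q t) • p j := (hexp (q t)).symm
    rw [hq]
    refine Submodule.sum_mem _ fun j _ => ?_
    by_cases hj : (j : ℕ) < r
    · refine Submodule.smul_mem _ _ (Submodule.subset_span ?_)
      exact ⟨⟨(j : ℕ), hj⟩, rfl⟩
    · have h0 : ∑ u, (p j ⬝ᵥ q u) ^ 2 = 0 := hc0 j (by omega)
      have : (p j ⬝ᵥ q t) ^ 2 = 0 := by
        have := (Finset.sum_eq_zero_iff_of_nonneg fun u _ => sq_nonneg _).mp h0 t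
          (Finset.mem_univ t)
        exact this
      rw [pow_eq_zero_iff (by norm_num)] at this
      rw [this, zero_smul]
      exact Submodule.zero_mem _
  · rw [Submodule.span_le]
    rintro _ ⟨t, rfl⟩
    show p (Fin.castLE hrd.le t) ∈ (Submodule.span ℝ (Set.range q) : Set (Fin d → ℝ))
    set j : Fin d := Fin.castLE hrd.le t with hjdef
    have hjr : (j : ℕ) < r := t.2
    have hpp : p j ⬝ᵥ p j = 1 := by rw [hpo]; simp
    have h1 : ∑ u, (q u ⬝ᵥ p j) ^ 2 = p j ⬝ᵥ p j := by
      rw [hpp, ← hc1 j hjr]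
      exact Finset.sum_congr rfl fun u _ => by rw [dotProduct_comm]
    have := bessel_eq q hqo (p j) h1
    rw [this]
    exact Submodule.sum_mem _ fun u _ =>
      Submodule.smul_mem _ _ (Submodule.subset_span ⟨u, rfl⟩)





lemma exists_onb_range {d r : ℕ} (W : Matrix (Fin d) (Fin r) ℝ) :
    ∃ (s : ℕ) (q : Fin s → (Fin d → ℝ)), s ≤ r ∧
      (∀ t u, q t ⬝ᵥ q u = if t = u then 1 else 0) ∧
      LinearMap.range W.mulVecLin = Submodule.span ℝ (Set.range q) := by
  classical
  set S : Submodule ℝ (EuclideanSpace ℝ (Fin d)) :=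
    LinearMap.range (Matrix.toEuclideanLin W) with hS
  let b := stdOrthonormalBasis ℝ S
  set L : EuclideanSpace ℝ (Fin d) ≃ₗ[ℝ] (Fin d → ℝ) :=
    WithLp.linearEquiv 2 ℝ (Fin d → ℝ) with hL
  set q : Fin (Module.finrank ℝ S) → (Fin d → ℝ) :=
    fun t => L ((b t : S) : EuclideanSpace ℝ (Fin d)) with hq
  refine ⟨Module.finrank ℝ S, q, ?_, ?_, ?_⟩
  · calc Module.finrank ℝ S ≤ Module.finrank ℝ (EuclideanSpace ℝ (Fin r)) :=
        LinearMap.finrank_range_le _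
      _ = r := finrank_euclideanSpace_fin
  · intro t u
    have h := orthonormal_iff_ite.mp b.orthonormal t u
    have hinner : (inner (𝕜 := ℝ) (b t) (b u) : ℝ)
        = q t ⬝ᵥ q u := by
      rw [Submodule.coe_inner]
      simp [q, L, PiLp.inner_apply, RCLike.inner_apply, dotProduct, WithLp.linearEquiv_apply]
      exact Finset.sum_congr rfl fun x _ => mul_comm _ _
    rw [← hinner, h]
  · have hspanE : S = Submodule.span ℝ
        (Set.range (fun t => ((b t : S) : EuclideanSpace ℝ (Fin d)))) := by
      conv_lhs => rw [← Submodule.map_subtype_top S]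
      rw [← b.toBasis.span_eq, Submodule.map_span]
      congr 1
      rw [← Set.range_comp]
      funext t
      simp [Function.comp_def, b.coe_toBasis]
    have hmap : LinearMap.range W.mulVecLin = Submodule.map L.toLinearMap S := by
      ext v
      constructor
      · rintro ⟨x, rfl⟩
        refine ⟨Matrix.toEuclideanLin W ((WithLp.equiv 2 (Fin r → ℝ)).symm x),
          ⟨_, rfl⟩, ?_⟩
        simp [Matrix.toEuclideanLin_apply, L, WithLp.linearEquiv_apply,
          Matrix.mulVecLin_apply]
      · rintro ⟨w, ⟨x, rfl⟩, rfl⟩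
        refine ⟨(WithLp.equiv 2 (Fin r → ℝ)) x, ?_⟩
        simp [Matrix.toEuclideanLin_apply, L, WithLp.linearEquiv_apply,
          Matrix.mulVecLin_apply]
    rw [hmap]
    conv_lhs => rw [hspanE]
    rw [Submodule.map_span]
    congr 1
    rw [← Set.range_comp]
    rfl



lemma cols_ortho {d r : ℕ} (Q : Matrix (Fin d) (Fin r) ℝ) (hQ : Qᵀ * Q = 1) :
    ∀ t u, (fun a => Q a t) ⬝ᵥ (fun a => Q a u) = if t = u then 1 else 0 := by
  intro t u
  have h := congrFun (congrFun hQ t) u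
  simpa [Matrix.mul_apply, dotProduct, Matrix.one_apply] using h

lemma trace_form {d r : ℕ} (M : Matrix (Fin d) (Fin d) ℝ) (Q : Matrix (Fin d) (Fin r) ℝ) :
    (Qᵀ * M * Q).trace = ∑ t, (fun a => Q a t) ⬝ᵥ M.mulVec (fun a => Q a t) := by
  simp only [Matrix.trace, Matrix.diag_apply, Matrix.mul_apply, Matrix.mulVec, dotProduct,
    Matrix.transpose_apply, Finset.sum_mul, Finset.mul_sum]
  refine Finset.sum_congr rfl fun t _ => ?_
  rw [Finset.sum_comm]
  refine Finset.sum_congr rfl fun a _ => ?_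
  refine Finset.sum_congr rfl fun b _ => ?_
  ring

lemma range_eq_span_cols {d r : ℕ} (Q : Matrix (Fin d) (Fin r) ℝ) :
    LinearMap.range Q.mulVecLin = Submodule.span ℝ (Set.range (fun t => (fun a => Q a t))) := by
  rw [Matrix.range_mulVecLin]
  rfl

lemma sum_quad_eq {d s : ℕ} (M : Matrix (Fin d) (Fin d) ℝ) (lam : Fin d → ℝ)
    (p : Fin d → Fin d → ℝ)
    (hMv : ∀ v, M.mulVec v = ∑ j, (lam j * (p j ⬝ᵥ v)) • p j)
    (q : Fin s → Fin d → ℝ) :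
    ∑ t, q t ⬝ᵥ M.mulVec (q t) = ∑ j, lam j * (∑ t, (p j ⬝ᵥ q t) ^ 2) := by
  have h1 : ∀ t, q t ⬝ᵥ M.mulVec (q t) = ∑ j, lam j * (p j ⬝ᵥ q t) ^ 2 := by
    intro t
    rw [hMv, dot_sum_right]
    refine Finset.sum_congr rfl fun j _ => ?_
    rw [dotProduct_smul, smul_eq_mul, dotProduct_comm, sq]
    ring
  rw [Finset.sum_congr rfl fun t _ => h1 t, Finset.sum_comm]
  refine Finset.sum_congr rfl fun j _ => ?_
  rw [Finset.mul_sum]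


lemma c_props {d s : ℕ} (p : Fin d → Fin d → ℝ) (q : Fin s → Fin d → ℝ)
    (hpo : ∀ j j', p j ⬝ᵥ p j' = if j = j' then 1 else 0)
    (hexp : ∀ v : Fin d → ℝ, ∑ j, (p j ⬝ᵥ v) • p j = v)
    (hqo : ∀ t u, q t ⬝ᵥ q u = if t = u then 1 else 0) :
    (∀ j, 0 ≤ ∑ t, (p j ⬝ᵥ q t) ^ 2) ∧ (∀ j, ∑ t, (p j ⬝ᵥ q t) ^ 2 ≤ 1) ∧
      (∑ j, ∑ t, (p j ⬝ᵥ q t) ^ 2 = (s : ℝ)) := by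
  refine ⟨fun j => Finset.sum_nonneg fun t _ => sq_nonneg _, fun j => ?_, ?_⟩
  · have hb := bessel_le q hqo (p j)
    have hpp : p j ⬝ᵥ p j = 1 := by rw [hpo]; simp
    calc ∑ t, (p j ⬝ᵥ q t) ^ 2 = ∑ t, (q t ⬝ᵥ p j) ^ 2 :=
          Finset.sum_congr rfl fun t _ => by rw [dotProduct_comm]
      _ ≤ p j ⬝ᵥ p j := hb
      _ = 1 := hpp
  · rw [Finset.sum_comm]
    have h1 : ∀ t, ∑ j, (p j ⬝ᵥ q t) ^ 2 = 1 := by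
      intro t
      rw [parseval p hexp (q t), hqo]; simp
    rw [Finset.sum_congr rfl fun t _ => h1 t]
    simp

lemma kyfan_trace_le {d r s : ℕ} (hrd : r < d) (hr1 : 1 ≤ r) (hsr : s ≤ r)
    (M : Matrix (Fin d) (Fin d) ℝ) (lam : Fin d → ℝ) (p : Fin d → Fin d → ℝ)
    (hanti : Antitone lam) (hlam0 : ∀ j, 0 ≤ lam j)
    (hpo : ∀ j j', p j ⬝ᵥ p j' = if j = j' then 1 else 0)
    (hexp : ∀ v : Fin d → ℝ, ∑ j, (p j ⬝ᵥ v) • p j = v)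
    (hMv : ∀ v, M.mulVec v = ∑ j, (lam j * (p j ⬝ᵥ v)) • p j)
    (q : Fin s → Fin d → ℝ)
    (hqo : ∀ t u, q t ⬝ᵥ q u = if t = u then 1 else 0) :
    ∑ t, q t ⬝ᵥ M.mulVec (q t) ≤ ∑ j ∈ F d r, lam j := by
  rw [sum_quad_eq M lam p hMv q]
  obtain ⟨h0, h1, hs⟩ := c_props p q hpo hexp hqo
  exact kyfan_c hrd hr1 s hsr lam _ hanti hlam0 h0 h1 hs

lemma kyfan_trace_eq {d r s : ℕ} (hrd : r < d) (hr1 : 1 ≤ r) (hsr : s ≤ r)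
    (M : Matrix (Fin d) (Fin d) ℝ) (lam : Fin d → ℝ) (p : Fin d → Fin d → ℝ)
    (hanti : Antitone lam) (hlam0 : ∀ j, 0 ≤ lam j)
    (hgap : lam ⟨r, hrd⟩ < lam ⟨r - 1, lt_of_le_of_lt (Nat.sub_le r 1) hrd⟩)
    (hpo : ∀ j j', p j ⬝ᵥ p j' = if j = j' then 1 else 0)
    (hexp : ∀ v : Fin d → ℝ, ∑ j, (p j ⬝ᵥ v) • p j = v)
    (hMv : ∀ v, M.mulVec v = ∑ j, (lam j * (p j ⬝ᵥ v)) • p j)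
    (q : Fin s → Fin d → ℝ)
    (hqo : ∀ t u, q t ⬝ᵥ q u = if t = u then 1 else 0)
    (heq : ∑ t, q t ⬝ᵥ M.mulVec (q t) = ∑ j ∈ F d r, lam j) :
    Submodule.span ℝ (Set.range q)
      = Submodule.span ℝ (Set.range (fun t : Fin r => p (Fin.castLE hrd.le t))) := by
  rw [sum_quad_eq M lam p hMv q] at heq
  obtain ⟨h0, h1, hs⟩ := c_props p q hpo hexp hqo
  obtain ⟨hA, hB⟩ := kyfan_c_eq hrd hr1 s hsr lam _ hanti hlam0 hgap h0 h1 hs heq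
  exact span_eq_span hrd p q hexp hpo hqo hA hB

lemma dot_U {m d : ℕ} (U : Matrix (Fin m) (Fin d) ℝ) (hU : Uᵀ * U = 1)
    (a b : Fin d → ℝ) : (U *ᵥ a) ⬝ᵥ (U *ᵥ b) = a ⬝ᵥ b := by
  rw [Matrix.dotProduct_mulVec, ← Matrix.vecMul_transpose, Matrix.vecMul_vecMul,
    hU, Matrix.vecMul_one]

lemma split_lemma {m d : ℕ} (U : Matrix (Fin m) (Fin d) ℝ) (hU : Uᵀ * U = 1)
    (v : Fin d → ℝ) (w : Fin m → ℝ) :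
    (U *ᵥ v - w) ⬝ᵥ (U *ᵥ v - w)
      = (v - Uᵀ *ᵥ w) ⬝ᵥ (v - Uᵀ *ᵥ w) + (w ⬝ᵥ w - (Uᵀ *ᵥ w) ⬝ᵥ (Uᵀ *ᵥ w)) := by
  have h1 : (U *ᵥ v) ⬝ᵥ (U *ᵥ v) = v ⬝ᵥ v := dot_U U hU v v
  have h2 : (U *ᵥ v) ⬝ᵥ w = v ⬝ᵥ (Uᵀ *ᵥ w) := by
    rw [dotProduct_comm, Matrix.dotProduct_mulVec, ← Matrix.mulVec_transpose,
      dotProduct_comm]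
  have h3 : w ⬝ᵥ (U *ᵥ v) = (Uᵀ *ᵥ w) ⬝ᵥ v := by
    rw [Matrix.dotProduct_mulVec, ← Matrix.mulVec_transpose]
  have h4 : (Uᵀ *ᵥ w) ⬝ᵥ v = v ⬝ᵥ (Uᵀ *ᵥ w) := dotProduct_comm _ _
  rw [sub_dotProduct, dotProduct_sub, dotProduct_sub, sub_dotProduct, dotProduct_sub,
    dotProduct_sub, h1, h2, h3]
  rw [h4]
  ring

lemma mulVec_QQt {d r : ℕ} (Q : Matrix (Fin d) (Fin r) ℝ) (z : Fin d → ℝ) :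
    Q *ᵥ (Qᵀ *ᵥ z) = ∑ t, ((fun a => Q a t) ⬝ᵥ z) • (fun a => Q a t) := by
  funext a
  rw [Finset.sum_apply]
  simp only [Matrix.mulVec, dotProduct, Matrix.transpose_apply, Pi.smul_apply, smul_eq_mul,
    Finset.sum_mul, Finset.mul_sum]
  refine Finset.sum_congr rfl fun t _ => ?_
  refine Finset.sum_congr rfl fun b _ => ?_
  ring

lemma M_entry {k m d : ℕ} (U : Matrix (Fin m) (Fin d) ℝ) (y : Fin k → Fin m → ℝ)
    (α : Fin k → ℝ) (M : Matrix (Fin d) (Fin d) ℝ)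
    (hMdef : M = ∑ i, α i • (Uᵀ * Matrix.vecMulVec (y i) (y i) * U)) (a b : Fin d) :
    M a b = ∑ i, α i * ((Uᵀ *ᵥ y i) a * (Uᵀ *ᵥ y i) b) := by
  rw [hMdef, Matrix.sum_apply]
  refine Finset.sum_congr rfl fun i _ => ?_
  rw [Matrix.smul_apply, smul_eq_mul]
  congr 1
  rw [Matrix.mul_apply]
  have h1 : ∀ q, (Uᵀ * Matrix.vecMulVec (y i) (y i)) a q = (Uᵀ *ᵥ y i) a * y i q := by
    intro q
    rw [Matrix.mul_apply]
    rw [show (Uᵀ *ᵥ y i) a = ∑ p, Uᵀ a p * y i p from rfl, Finset.sum_mul]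
    exact Finset.sum_congr rfl fun p _ => by rw [Matrix.vecMulVec_apply]; ring
  rw [Finset.sum_congr rfl fun q _ => by rw [h1 q]]
  rw [show (Uᵀ *ᵥ y i) b = ∑ q, Uᵀ b q * y i q from rfl, Finset.mul_sum]
  exact Finset.sum_congr rfl fun q _ => by rw [Matrix.transpose_apply]; ring

lemma quadM {k m d : ℕ} (U : Matrix (Fin m) (Fin d) ℝ) (y : Fin k → Fin m → ℝ)
    (α : Fin k → ℝ) (M : Matrix (Fin d) (Fin d) ℝ)
    (hMdef : M = ∑ i, α i • (Uᵀ * Matrix.vecMulVec (y i) (y i) * U)) (u v : Fin d → ℝ) :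
    u ⬝ᵥ M.mulVec v = ∑ i, α i * (((Uᵀ *ᵥ y i) ⬝ᵥ u) * ((Uᵀ *ᵥ y i) ⬝ᵥ v)) := by
  have hMab := M_entry U y α M hMdef
  have hMvA : ∀ a, (M *ᵥ v) a = ∑ i, α i * ((Uᵀ *ᵥ y i) a * ((Uᵀ *ᵥ y i) ⬝ᵥ v)) := by
    intro a
    show (∑ b, M a b * v b) = _
    calc ∑ b, M a b * v b
        = ∑ b, ∑ i, α i * ((Uᵀ *ᵥ y i) a * ((Uᵀ *ᵥ y i) b * v b)) := by
          refine Finset.sum_congr rfl fun b _ => ?_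
          rw [hMab a b, Finset.sum_mul]
          exact Finset.sum_congr rfl fun i _ => by ring
      _ = ∑ i, ∑ b, α i * ((Uᵀ *ᵥ y i) a * ((Uᵀ *ᵥ y i) b * v b)) := Finset.sum_comm
      _ = _ := by
          refine Finset.sum_congr rfl fun i _ => ?_
          rw [show (Uᵀ *ᵥ y i) ⬝ᵥ v = ∑ b, (Uᵀ *ᵥ y i) b * v b from rfl,
            ← Finset.mul_sum, ← Finset.mul_sum]
  show (∑ a, u a * (M *ᵥ v) a) = _
  calc ∑ a, u a * (M *ᵥ v) a
      = ∑ a, ∑ i, α i * (((Uᵀ *ᵥ y i) a * u a) * ((Uᵀ *ᵥ y i) ⬝ᵥ v)) := by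
        refine Finset.sum_congr rfl fun a _ => ?_
        rw [hMvA a, Finset.mul_sum]
        exact Finset.sum_congr rfl fun i _ => by ring
    _ = ∑ i, ∑ a, α i * (((Uᵀ *ᵥ y i) a * u a) * ((Uᵀ *ᵥ y i) ⬝ᵥ v)) := Finset.sum_comm
    _ = _ := by
        refine Finset.sum_congr rfl fun i _ => ?_
        rw [Finset.sum_congr rfl fun a _ =>
          show α i * (((Uᵀ *ᵥ y i) a * u a) * ((Uᵀ *ᵥ y i) ⬝ᵥ v))
              = ((Uᵀ *ᵥ y i) a * u a) * (α i * ((Uᵀ *ᵥ y i) ⬝ᵥ v)) from by ring]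
        rw [← Finset.sum_mul]
        rw [show (Uᵀ *ᵥ y i) ⬝ᵥ u = ∑ a, (Uᵀ *ᵥ y i) a * u a from rfl]
        ring

end MTL

open MTL in
/-- Proposition on reweighted MTL with common covariates: if
`X = U D Vᵀ` is an SVD of the full-rank data matrix, `M = Σᵢ αᵢ Uᵀ yᵢ yᵢᵀ U` has an
eigengap between its `r`-th and `(r+1)`-th largest eigenvalues, and `Q_r` maximizes
`tr(Qᵀ M Q)` over matrices with `r` orthonormal columns, then every global minimizer
`B⋆` of the reweighted MTL objective has column span equal to that of
`(XᵀX)⁻¹ V D Q_r`. -/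
theorem reweighted_mtl_optimal_span
    (k d r m : ℕ) (hr1 : 1 ≤ r) (hrk : r ≤ k) (hrd : r < d) (hmd : d ≤ m)
    (X : Matrix (Fin m) (Fin d) ℝ) (hrank : X.rank = d)
    (U : Matrix (Fin m) (Fin d) ℝ) (hU : Uᵀ * U = 1)
    (Ddiag : Fin d → ℝ) (hD : ∀ i, 0 < Ddiag i)
    (V : Matrix (Fin d) (Fin d) ℝ) (hV : Vᵀ * V = 1)
    (hX : X = U * Matrix.diagonal Ddiag * Vᵀ)
    (y : Fin k → Fin m → ℝ) (α : Fin k → ℝ) (hα : ∀ i, 0 < α i)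
    (M : Matrix (Fin d) (Fin d) ℝ)
    (hMdef : M = ∑ i, α i • (Uᵀ * Matrix.vecMulVec (y i) (y i) * U))
    (hM : M.IsHermitian)
    (hgap : ∃ σ : Equiv.Perm (Fin d), Antitone (fun i => hM.eigenvalues (σ i)) ∧
      hM.eigenvalues (σ ⟨r, hrd⟩) <
        hM.eigenvalues (σ ⟨r - 1, lt_of_le_of_lt (Nat.sub_le r 1) hrd⟩))
    (Q : Matrix (Fin d) (Fin r) ℝ) (hQ : Qᵀ * Q = 1)
    (hQmax : ∀ Q' : Matrix (Fin d) (Fin r) ℝ, Q'ᵀ * Q' = 1 →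
      (Q'ᵀ * M * Q').trace ≤ (Qᵀ * M * Q).trace) :
    ∀ (B : Matrix (Fin d) (Fin r) ℝ) (A : Fin k → Fin r → ℝ),
      (∀ (B' : Matrix (Fin d) (Fin r) ℝ) (A' : Fin k → Fin r → ℝ),
        (∑ i, α i * vnorm (fun j => X.mulVec (B.mulVec (A i)) j - y i j) ^ 2) ≤
        (∑ i, α i * vnorm (fun j => X.mulVec (B'.mulVec (A' i)) j - y i j) ^ 2)) →
      LinearMap.range B.mulVecLin =
        LinearMap.range ((Xᵀ * X)⁻¹ * (V * Matrix.diagonal Ddiag * Q)).mulVecLin := by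
  intro B A hopt
  classical
  obtain ⟨σ, hanti, hgt⟩ := hgap
  set lam : Fin d → ℝ := fun j => hM.eigenvalues (σ j) with hlamdef
  set p : Fin d → Fin d → ℝ :=
    fun j => (WithLp.equiv 2 (Fin d → ℝ)) (hM.eigenvectorBasis (σ j)) with hpdef
  -- inner product transfer
  have hinnerdot : ∀ u w : EuclideanSpace ℝ (Fin d),
      (inner ℝ u w : ℝ) = (WithLp.equiv 2 (Fin d → ℝ) u) ⬝ᵥ (WithLp.equiv 2 (Fin d → ℝ) w) := by
    intro u w
    simp [PiLp.inner_apply, RCLike.inner_apply, dotProduct]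
    exact Finset.sum_congr rfl fun x _ => mul_comm _ _
  -- orthonormality of the eigenvector family
  have hpo : ∀ j j', p j ⬝ᵥ p j' = if j = j' then 1 else 0 := by
    intro j j'
    have h := orthonormal_iff_ite.mp hM.eigenvectorBasis.orthonormal (σ j) (σ j')
    rw [hinnerdot] at h
    simp only [hpdef]
    rw [h]
    simp [Equiv.apply_eq_iff_eq]
  have hpp : ∀ j, p j ⬝ᵥ p j = 1 := fun j => by rw [hpo]; simp
  -- expansion in the eigenbasis
  have hexp : ∀ v : Fin d → ℝ, ∑ j, (p j ⬝ᵥ v) • p j = v := by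
    intro v
    have h := hM.eigenvectorBasis.sum_repr' ((WithLp.equiv 2 (Fin d → ℝ)).symm v)
    rw [← Equiv.sum_comp σ (fun i => (inner (𝕜 := ℝ) (hM.eigenvectorBasis i)
      ((WithLp.equiv 2 (Fin d → ℝ)).symm v)) • hM.eigenvectorBasis i)] at h
    have h2 := congrArg (WithLp.linearEquiv 2 ℝ (Fin d → ℝ)) h
    rw [map_sum] at h2
    simp only [_root_.map_smul, WithLp.linearEquiv_apply] at h2
    change _ = v at h2
    have h3 : ∀ j, (inner (𝕜 := ℝ) (hM.eigenvectorBasis (σ j))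
        ((WithLp.equiv 2 (Fin d → ℝ)).symm v) : ℝ) = p j ⬝ᵥ v := by
      intro j
      rw [hinnerdot, Equiv.apply_symm_apply]
    calc ∑ j, (p j ⬝ᵥ v) • p j
        = ∑ j, (inner (𝕜 := ℝ) (hM.eigenvectorBasis (σ j))
            ((WithLp.equiv 2 (Fin d → ℝ)).symm v) : ℝ) •
            (WithLp.equiv 2 (Fin d → ℝ)) (hM.eigenvectorBasis (σ j)) :=
          Finset.sum_congr rfl fun j _ => by rw [h3 j]
      _ = v := h2
  -- eigenvalue equations
  have heig : ∀ j, M.mulVec (p j) = lam j • p j := fun j =>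
    hM.mulVec_eigenvectorBasis (σ j)
  -- quadratic form
  have hMquad : ∀ u v : Fin d → ℝ,
      u ⬝ᵥ M.mulVec v = ∑ i, α i * (((Uᵀ *ᵥ y i) ⬝ᵥ u) * ((Uᵀ *ᵥ y i) ⬝ᵥ v)) :=
    quadM U y α M hMdef
  have hlam0 : ∀ j, 0 ≤ lam j := by
    intro j
    have h1 : p j ⬝ᵥ M.mulVec (p j) = lam j := by
      rw [heig j, dotProduct_smul, smul_eq_mul, hpp]; ring
    rw [← h1, hMquad]
    exact Finset.sum_nonneg fun i _ => mul_nonneg (hα i).le (mul_self_nonneg _)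
  have hMv : ∀ v, M.mulVec v = ∑ j, (lam j * (p j ⬝ᵥ v)) • p j := by
    intro v
    conv_lhs => rw [← hexp v]
    rw [show M.mulVec (∑ j, (p j ⬝ᵥ v) • p j) = ∑ j, (p j ⬝ᵥ v) • M.mulVec (p j) from by
      rw [← Matrix.mulVecLin_apply, map_sum]
      exact Finset.sum_congr rfl fun j _ => by
        rw [LinearMap.map_smul, Matrix.mulVecLin_apply]]
    exact Finset.sum_congr rfl fun j _ => by rw [heig j, smul_smul, mul_comm]
  have hgap' : lam ⟨r, hrd⟩ < lam ⟨r - 1, lt_of_le_of_lt (Nat.sub_le r 1) hrd⟩ := hgt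
  -- the matrix of the top-r eigenvectors
  set PM : Matrix (Fin d) (Fin r) ℝ := Matrix.of (fun a t => p (Fin.castLE hrd.le t) a)
    with hPMdef
  have hPMo : PMᵀ * PM = 1 := by
    ext t u
    have h := hpo (Fin.castLE hrd.le t) (Fin.castLE hrd.le u)
    simp only [Matrix.mul_apply, Matrix.transpose_apply, Matrix.one_apply, hPMdef,
      Matrix.of_apply]
    rw [show (∑ a, p (Fin.castLE hrd.le t) a * p (Fin.castLE hrd.le u) a)
        = p (Fin.castLE hrd.le t) ⬝ᵥ p (Fin.castLE hrd.le u) from rfl, h]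
    simp [Fin.castLE_inj]
  have htrPM : (PMᵀ * M * PM).trace = ∑ j ∈ F d r, lam j := by
    rw [trace_form, sum_F (f := lam) hrd.le]
    refine Finset.sum_congr rfl fun t _ => ?_
    show p (Fin.castLE hrd.le t) ⬝ᵥ M.mulVec (p (Fin.castLE hrd.le t)) = _
    rw [heig, dotProduct_smul, smul_eq_mul, hpp]; ring
  -- columns of Q
  have hqQ := cols_ortho Q hQ
  have htrQ_le : (Qᵀ * M * Q).trace ≤ ∑ j ∈ F d r, lam j := by
    rw [trace_form]
    exact kyfan_trace_le hrd hr1 le_rfl M lam p hanti hlam0 hpo hexp hMv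
      (fun t a => Q a t) hqQ
  have htrQ : (Qᵀ * M * Q).trace = ∑ j ∈ F d r, lam j :=
    le_antisymm htrQ_le (htrPM ▸ hQmax PM hPMo)
  -- the W matrix and its orthonormal basis
  set W : Matrix (Fin d) (Fin r) ℝ := Matrix.diagonal Ddiag * Vᵀ * B with hWdef
  obtain ⟨s, qW, hsr, hqWo, hWspan⟩ := exists_onb_range W
  -- objective function rewriting
  have hXBmul : ∀ (B0 : Matrix (Fin d) (Fin r) ℝ) (a : Fin r → ℝ),
      X.mulVec (B0.mulVec a) = U.mulVec ((Matrix.diagonal Ddiag * Vᵀ * B0).mulVec a) := by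
    intro B0 a
    rw [Matrix.mulVec_mulVec, Matrix.mulVec_mulVec, hX, Matrix.mul_assoc,
      Matrix.mul_assoc, Matrix.mul_assoc]
  have hobj : ∀ (B0 : Matrix (Fin d) (Fin r) ℝ) (A0 : Fin k → Fin r → ℝ),
      (∑ i, α i * vnorm (fun j => X.mulVec (B0.mulVec (A0 i)) j - y i j) ^ 2)
        = (∑ i, α i * (((Matrix.diagonal Ddiag * Vᵀ * B0).mulVec (A0 i) - Uᵀ *ᵥ y i) ⬝ᵥ
            ((Matrix.diagonal Ddiag * Vᵀ * B0).mulVec (A0 i) - Uᵀ *ᵥ y i)))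
          + ∑ i, α i * (y i ⬝ᵥ y i - (Uᵀ *ᵥ y i) ⬝ᵥ (Uᵀ *ᵥ y i)) := by
    intro B0 A0
    rw [← Finset.sum_add_distrib]
    refine Finset.sum_congr rfl fun i _ => ?_
    rw [vnorm_sq]
    rw [show (fun j => X.mulVec (B0.mulVec (A0 i)) j - y i j)
        = X.mulVec (B0.mulVec (A0 i)) - y i from rfl]
    rw [hXBmul B0 (A0 i), split_lemma U hU _ (y i)]
    ring
  -- diagonal facts
  have hVVt : V * Vᵀ = 1 := mul_eq_one_comm.mp hV
  have hDinvD : Matrix.diagonal (fun i => (Ddiag i)⁻¹) * Matrix.diagonal Ddiag = 1 := by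
    rw [Matrix.diagonal_mul_diagonal,
      show (fun i => (Ddiag i)⁻¹ * Ddiag i) = fun _ => (1 : ℝ) from
        funext fun i => inv_mul_cancel₀ (hD i).ne', Matrix.diagonal_one]
  have hDDinv : Matrix.diagonal Ddiag * Matrix.diagonal (fun i => (Ddiag i)⁻¹) = 1 := by
    rw [Matrix.diagonal_mul_diagonal,
      show (fun i => Ddiag i * (Ddiag i)⁻¹) = fun _ => (1 : ℝ) from
        funext fun i => mul_inv_cancel₀ (hD i).ne', Matrix.diagonal_one]
  have hWq : Matrix.diagonal Ddiag * Vᵀ *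
      (V * Matrix.diagonal (fun i => (Ddiag i)⁻¹) * Q) = Q := by
    simp only [Matrix.mul_assoc]
    rw [← Matrix.mul_assoc Vᵀ V, hV, Matrix.one_mul, ← Matrix.mul_assoc, hDDinv,
      Matrix.one_mul]
  -- generic trace-to-data computation
  have htrz : ∀ (s' : ℕ) (q : Fin s' → Fin d → ℝ),
      (∑ t, q t ⬝ᵥ M.mulVec (q t)) = ∑ i, α i * (∑ t, (q t ⬝ᵥ (Uᵀ *ᵥ y i)) ^ 2) := by
    intro s' q
    calc ∑ t, q t ⬝ᵥ M.mulVec (q t)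
        = ∑ t, ∑ i, α i * (((Uᵀ *ᵥ y i) ⬝ᵥ q t) * ((Uᵀ *ᵥ y i) ⬝ᵥ q t)) :=
          Finset.sum_congr rfl fun t _ => hMquad _ _
      _ = ∑ i, ∑ t, α i * (((Uᵀ *ᵥ y i) ⬝ᵥ q t) * ((Uᵀ *ᵥ y i) ⬝ᵥ q t)) := Finset.sum_comm
      _ = ∑ i, α i * (∑ t, (q t ⬝ᵥ (Uᵀ *ᵥ y i)) ^ 2) := by
          refine Finset.sum_congr rfl fun i _ => ?_
          rw [Finset.mul_sum]
          refine Finset.sum_congr rfl fun t _ => ?_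
          rw [sq, dotProduct_comm (q t)]
  have htrQz : (Qᵀ * M * Q).trace
      = ∑ i, α i * (∑ t, ((fun a => Q a t) ⬝ᵥ (Uᵀ *ᵥ y i)) ^ 2) := by
    rw [trace_form]
    exact htrz r (fun t a => Q a t)
  have hQQt : ∀ zz : Fin d → ℝ,
      (Q *ᵥ (Qᵀ *ᵥ zz) - zz) ⬝ᵥ (Q *ᵥ (Qᵀ *ᵥ zz) - zz)
        = zz ⬝ᵥ zz - ∑ t, ((fun a => Q a t) ⬝ᵥ zz) ^ 2 := by
    intro zz
    rw [mulVec_QQt Q zz,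
      expand_onb (fun t a => Q a t) hqQ zz (fun t => (fun a => Q a t) ⬝ᵥ zz)]
    simp
  -- upper bound for the minimizer value
  have hup : ∑ i, α i * ((W *ᵥ A i - Uᵀ *ᵥ y i) ⬝ᵥ (W *ᵥ A i - Uᵀ *ᵥ y i))
      ≤ ∑ i, α i * ((Uᵀ *ᵥ y i) ⬝ᵥ (Uᵀ *ᵥ y i)) - ∑ j ∈ F d r, lam j := by
    have h := hopt (V * Matrix.diagonal (fun i => (Ddiag i)⁻¹) * Q)
      (fun i => Qᵀ *ᵥ (Uᵀ *ᵥ y i))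
    rw [hobj B A, hobj _ _] at h
    rw [hWq, ← hWdef] at h
    have h4 : ∑ i, α i * ((Q *ᵥ (Qᵀ *ᵥ (Uᵀ *ᵥ y i)) - Uᵀ *ᵥ y i) ⬝ᵥ
          (Q *ᵥ (Qᵀ *ᵥ (Uᵀ *ᵥ y i)) - Uᵀ *ᵥ y i))
        = ∑ i, α i * ((Uᵀ *ᵥ y i) ⬝ᵥ (Uᵀ *ᵥ y i)) - (Qᵀ * M * Q).trace := by
      rw [htrQz, ← Finset.sum_sub_distrib]
      refine Finset.sum_congr rfl fun i _ => ?_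
      rw [hQQt (Uᵀ *ᵥ y i)]
      ring
    linarith [h, h4, htrQ]
  -- lower bound for the minimizer value
  have hlow : ∑ i, α i * ((Uᵀ *ᵥ y i) ⬝ᵥ (Uᵀ *ᵥ y i)) - (∑ t, qW t ⬝ᵥ M.mulVec (qW t))
      ≤ ∑ i, α i * ((W *ᵥ A i - Uᵀ *ᵥ y i) ⬝ᵥ (W *ᵥ A i - Uᵀ *ᵥ y i)) := by
    have hper : ∀ i, (Uᵀ *ᵥ y i) ⬝ᵥ (Uᵀ *ᵥ y i) - ∑ t, (qW t ⬝ᵥ (Uᵀ *ᵥ y i)) ^ 2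
        ≤ (W *ᵥ A i - Uᵀ *ᵥ y i) ⬝ᵥ (W *ᵥ A i - Uᵀ *ᵥ y i) := by
      intro i
      have hmem : W *ᵥ A i ∈ LinearMap.range W.mulVecLin := ⟨A i, rfl⟩
      rw [hWspan] at hmem
      obtain ⟨β, hβ⟩ := (Submodule.mem_span_range_iff_exists_fun ℝ).mp hmem
      rw [← hβ, expand_onb qW hqWo (Uᵀ *ᵥ y i) β]
      have h0 : 0 ≤ ∑ t, (β t - qW t ⬝ᵥ (Uᵀ *ᵥ y i)) ^ 2 :=
        Finset.sum_nonneg fun t _ => sq_nonneg _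
      linarith
    rw [htrz s qW, ← Finset.sum_sub_distrib]
    refine Finset.sum_le_sum fun i _ => ?_
    rw [← mul_sub]
    exact mul_le_mul_of_nonneg_left (hper i) (hα i).le
  -- squeeze
  have hTW_le : (∑ t, qW t ⬝ᵥ M.mulVec (qW t)) ≤ ∑ j ∈ F d r, lam j :=
    kyfan_trace_le hrd hr1 hsr M lam p hanti hlam0 hpo hexp hMv qW hqWo
  have hTW : (∑ t, qW t ⬝ᵥ M.mulVec (qW t)) = ∑ j ∈ F d r, lam j := by
    have h7 := le_trans hlow hup
    exact le_antisymm hTW_le (by linarith)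
  -- span identification
  have hspanW := kyfan_trace_eq hrd hr1 hsr M lam p hanti hlam0 hgap' hpo hexp hMv qW hqWo hTW
  have htrQ2 : ∑ t, (fun a => Q a t) ⬝ᵥ M.mulVec (fun a => Q a t) = ∑ j ∈ F d r, lam j := by
    rw [← trace_form]; exact htrQ
  have hspanQ := kyfan_trace_eq hrd hr1 le_rfl M lam p hanti hlam0 hgap' hpo hexp hMv
    (fun t a => Q a t) hqQ htrQ2
  have hWQrange : LinearMap.range W.mulVecLin = LinearMap.range Q.mulVecLin := by
    rw [hWspan, hspanW, ← hspanQ, range_eq_span_cols]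
  -- final matrix algebra
  have hBE : B = (V * Matrix.diagonal (fun i => (Ddiag i)⁻¹)) * W := by
    have h8 : (V * Matrix.diagonal (fun i => (Ddiag i)⁻¹)) *
        (Matrix.diagonal Ddiag * Vᵀ * B) = B := by
      simp only [Matrix.mul_assoc]
      rw [← Matrix.mul_assoc (Matrix.diagonal fun i => (Ddiag i)⁻¹) (Matrix.diagonal Ddiag),
        hDinvD, Matrix.one_mul, ← Matrix.mul_assoc, hVVt, Matrix.one_mul]
    rw [hWdef]
    exact h8.symm
  have hXtX : Xᵀ * X = V * (Matrix.diagonal (fun i => Ddiag i * Ddiag i) * Vᵀ) := by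
    rw [hX, Matrix.transpose_mul, Matrix.transpose_mul, Matrix.transpose_transpose,
      Matrix.diagonal_transpose]
    simp only [Matrix.mul_assoc]
    rw [← Matrix.mul_assoc Uᵀ U, hU, one_mul,
      ← Matrix.mul_assoc (Matrix.diagonal Ddiag) (Matrix.diagonal Ddiag),
      Matrix.diagonal_mul_diagonal]
  have hXtXinv : (Xᵀ * X)⁻¹ = V * (Matrix.diagonal (fun i => (Ddiag i * Ddiag i)⁻¹) * Vᵀ) := by
    apply Matrix.inv_eq_right_inv
    rw [hXtX]
    simp only [Matrix.mul_assoc]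
    rw [← Matrix.mul_assoc Vᵀ V, hV, one_mul,
      ← Matrix.mul_assoc (Matrix.diagonal fun i => Ddiag i * Ddiag i),
      Matrix.diagonal_mul_diagonal,
      show (fun i => (Ddiag i * Ddiag i) * (Ddiag i * Ddiag i)⁻¹) = fun _ => (1 : ℝ) from
        funext fun i => mul_inv_cancel₀ (mul_pos (hD i) (hD i)).ne',
      Matrix.diagonal_one, one_mul, hVVt]
  have hRHSQ : (Xᵀ * X)⁻¹ * (V * Matrix.diagonal Ddiag * Q)
      = (V * Matrix.diagonal (fun i => (Ddiag i)⁻¹)) * Q := by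
    rw [hXtXinv]
    simp only [Matrix.mul_assoc]
    rw [← Matrix.mul_assoc Vᵀ V, hV, Matrix.one_mul,
      ← Matrix.mul_assoc (Matrix.diagonal fun i => (Ddiag i * Ddiag i)⁻¹),
      Matrix.diagonal_mul_diagonal,
      show (fun i => (Ddiag i * Ddiag i)⁻¹ * Ddiag i) = fun i => (Ddiag i)⁻¹ from
        funext fun i => by rw [mul_inv, mul_assoc, inv_mul_cancel₀ (hD i).ne', mul_one]]
  rw [hRHSQ]
  conv_lhs => rw [hBE]
  simp only [Matrix.mulVecLin_mul, LinearMap.range_comp]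
  rw [hWQrange]
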